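/- Assume the action set I of player 1 is a singleton. Define 𝓛₀ = P(K∖T), 𝓛_{n+1} = Φ(𝓛ₙ) and 𝓚ₙ = P(K∖T) ∖ 𝓛ₙ. Then for every n ∈ ℕ, every support L ∈ 𝓚ₙ, every initial distribution δ with support L and every strategy τ of player 2, the probability (under δ, the unique strategy of player 1, and τ) that the play visits T at some step m with 2 ≤ m ≤ n+1 is strictly positive. -/

import Mathlib

open scoped Classical

noncomputable section

/-- A probability distribution on a finite type, given by a nonnegative
real-valued density summing to `1`. -/
structure FDist (X : Type*) [Fintype X] where
  f : X → ℝ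
  nonneg : ∀ x, 0 ≤ f x
  sum_one : ∑ x, f x = 1

/-- The support of a distribution: the set of points with positive probability. -/
def FDist.support {X : Type*} [Fintype X] (δ : FDist X) : Finset X :=
  Finset.univ.filter fun x => 0 < δ.f x

/-- The uniform distribution on a nonempty finite set. -/
def uniform {X : Type*} [Fintype X] (L : Finset X) (hL : L.Nonempty) : FDist X where
  f x := if x ∈ L then (L.card : ℝ)⁻¹ else 0
  nonneg x := by split_ifs <;> positivity
  sum_one := by
    rw [Finset.sum_ite_mem, Finset.univ_inter, Finset.sum_const, nsmul_eq_mul,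
      mul_inv_cancel₀]
    exact_mod_cast (Finset.card_pos.mpr hL).ne'

/-- Uniform distribution on `L`, defaulting to the uniform distribution on the
whole type when `L` is empty. -/
def uniformD {X : Type*} [Fintype X] [Nonempty X] (L : Finset X) : FDist X :=
  if h : L.Nonempty then uniform L h else uniform Finset.univ Finset.univ_nonempty

/-- The Dirac distribution on a point. -/
def dirac {X : Type*} [Fintype X] (x : X) : FDist X where
  f y := if y = x then 1 else 0
  nonneg y := by by_cases h : y = x <;> simp [h]
  sum_one := by simp

/-- A stochastic game with partial observation on both sides and a reachability
objective for player 1: states `K`, actions `I`, `J`, signals `C`, `D`, target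
states `T`, transition probabilities `p`, and actions encoded in signals via
`act₁`, `act₂`. -/
structure Game (K I J C D : Type*) [Fintype K] [Fintype I] [Fintype J] [Fintype C] [Fintype D] where
  T : Finset K
  p : K → I → J → C × D × K → ℝ
  p_nonneg : ∀ k i j x, 0 ≤ p k i j x
  p_sum : ∀ k i j, ∑ x : C × D × K, p k i j x = 1
  act₁ : C → I
  act₂ : D → J
  act_compat : ∀ k i j c d l, 0 < p k i j (c, d, l) → i = act₁ c ∧ j = act₂ d

/-- A (behavioral) strategy of player 1: a distribution on actions for each
finite sequence of received signals. -/
abbrev Strategy1 (I C : Type*) [Fintype I] : Type _ := List C → FDist I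

/-- A (behavioral) strategy of player 2. -/
abbrev Strategy2 (J D : Type*) [Fintype J] : Type _ := List D → FDist J

/-- A play with `n+1` states: the initial state followed by `n` steps, each
consisting of a signal for player 1, a signal for player 2 and the next state. -/
structure Hist (K C D : Type*) (n : ℕ) where
  first : K
  steps : Fin n → C × D × K

instance (K C D : Type*) [Fintype K] [Fintype C] [Fintype D] (n : ℕ) :
    Fintype (Hist K C D n) :=
  Fintype.ofEquiv (K × (Fin n → C × D × K))
    { toFun := fun x => ⟨x.1, x.2⟩
      invFun := fun h => (h.first, h.steps)
      left_inv := fun _ => rfl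
      right_inv := fun _ => rfl }

namespace Hist

variable {K C D : Type*}

/-- The last state of a play. -/
def last : ∀ {n : ℕ}, Hist K C D n → K
  | 0, h => h.first
  | n + 1, h => (h.steps (Fin.last n)).2.2

/-- The play obtained by removing the last step. -/
def init {n : ℕ} (h : Hist K C D (n + 1)) : Hist K C D n :=
  ⟨h.first, fun m => h.steps m.castSucc⟩

/-- The `m`-th state of a play, `0`-indexed: `state h 0` is the initial state
(called `k₁` in `1`-indexed notation). -/
def state {n : ℕ} (h : Hist K C D n) (m : Fin (n + 1)) : K :=
  if hm : m.val = 0 then h.first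
  else (h.steps ⟨m.val - 1, by have := m.isLt; omega⟩).2.2

/-- The sequence of signals received by player 1 along the play. -/
def sig1 {n : ℕ} (h : Hist K C D n) : List C := List.ofFn fun m => (h.steps m).1

/-- The sequence of signals received by player 2 along the play. -/
def sig2 {n : ℕ} (h : Hist K C D n) : List D := List.ofFn fun m => (h.steps m).2.1

/-- The play visits the target set `T`. -/
def visits (T : Finset K) {n : ℕ} (h : Hist K C D n) : Prop :=
  ∃ m : Fin (n + 1), h.state m ∈ T

end Hist

namespace Game

variable {K I J C D : Type*} [Fintype K] [Fintype I] [Fintype J] [Fintype C] [Fintype D]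

/-- The probability of a given play of `n` steps, under initial distribution `δ`
and strategies `σ`, `τ`. -/
def playProb (G : Game K I J C D) (δ : FDist K) (σ : Strategy1 I C) (τ : Strategy2 J D) :
    ∀ n : ℕ, Hist K C D n → ℝ
  | 0, h => δ.f h.first
  | n + 1, h =>
      G.playProb δ σ τ n h.init *
        ∑ i : I, ∑ j : J,
          (σ h.init.sig1).f i * (τ h.init.sig2).f j *
            G.p h.init.last i j (h.steps (Fin.last n))

/-- The probability that a play with `n+1` states visits the target set. -/
def reachProb (G : Game K I J C D) (δ : FDist K) (σ : Strategy1 I C)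
    (τ : Strategy2 J D) (n : ℕ) : ℝ :=
  ∑ h : Hist K C D n, if h.visits G.T then G.playProb δ σ τ n h else 0

/-- The reachability probability `γ₁(δ,σ,τ)`: the supremum over horizons of the
probability that the play visits the target set. -/
def val (G : Game K I J C D) (δ : FDist K) (σ : Strategy1 I C) (τ : Strategy2 J D) : ℝ :=
  ⨆ n : ℕ, G.reachProb δ σ τ n

/-- `δ` is almost-surely winning for player 1. -/
def AlmostSureWin1 (G : Game K I J C D) (δ : FDist K) : Prop :=
  ∃ σ, ∀ τ, G.val δ σ τ = 1

/-- `δ` is positively winning for player 1. -/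
def PositiveWin1 (G : Game K I J C D) (δ : FDist K) : Prop :=
  ∃ σ, ∀ τ, 0 < G.val δ σ τ

/-- `δ` is positively winning for player 2. -/
def PositiveWin2 (G : Game K I J C D) (δ : FDist K) : Prop :=
  ∃ τ, ∀ σ, G.val δ σ τ < 1

/-- `δ` is surely (equivalently here, almost-surely) winning for player 2. -/
def SureWin2 (G : Game K I J C D) (δ : FDist K) : Prop :=
  ∃ τ, ∀ σ, G.val δ σ τ = 0

/-- One-step belief operator of player 1. -/
def B1 (G : Game K I J C D) (L : Finset K) (c : C) : Finset K :=
  Finset.univ.filter fun k => ∃ l ∈ L, ∃ d : D, 0 < G.p l (G.act₁ c) (G.act₂ d) (c, d, k)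

/-- One-step belief operator of player 2. -/
def B2 (G : Game K I J C D) (L : Finset K) (d : D) : Finset K :=
  Finset.univ.filter fun k => ∃ l ∈ L, ∃ c : C, 0 < G.p l (G.act₁ c) (G.act₂ d) (c, d, k)

/-- Belief of player 1 after a sequence of signals. -/
def B1seq (G : Game K I J C D) (L : Finset K) (cs : List C) : Finset K := cs.foldl G.B1 L

/-- Belief of player 2 after a sequence of signals. -/
def B2seq (G : Game K I J C D) (L : Finset K) (ds : List D) : Finset K := ds.foldl G.B2 L

/-- One-step pessimistic belief operator of player 1. -/
def B1p (G : Game K I J C D) (L : Finset K) (c : C) : Finset K := G.B1 (L \ G.T) c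

/-- One-step pessimistic belief operator of player 2. -/
def B2p (G : Game K I J C D) (L : Finset K) (d : D) : Finset K := G.B2 (L \ G.T) d

/-- Pessimistic belief of player 1 after a sequence of signals. -/
def B1pseq (G : Game K I J C D) (L : Finset K) (cs : List C) : Finset K := cs.foldl G.B1p L

/-- Pessimistic belief of player 2 after a sequence of signals. -/
def B2pseq (G : Game K I J C D) (L : Finset K) (ds : List D) : Finset K := ds.foldl G.B2p L

/-- The operator `Φ` on collections of subsets of `K ∖ T`. -/
def Phi (G : Game K I J C D) (𝓛 : Set (Finset K)) : Set (Finset K) :=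
  {L | L ∈ 𝓛 ∧ L ∩ G.T = ∅ ∧ ∃ j : J, ∀ d : D, G.act₂ d = j → G.B2 L d ∈ 𝓛}

theorem Phi_mono (G : Game K I J C D) : Monotone G.Phi := by
  intro A B hAB L hL
  obtain ⟨h1, h2, j, hj⟩ := hL
  exact ⟨hAB h1, h2, j, fun d hd => hAB (hj d hd)⟩

/-- `𝓛_∞`, the greatest fixpoint of `Φ`. -/
def Linf (G : Game K I J C D) : Set (Finset K) :=
  OrderHom.gfp ⟨G.Phi, G.Phi_mono⟩

/-- The winning condition of the `𝓛`-game for player 1, on a play with initial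
support `L`: some state `k_m` is a target state and all earlier pessimistic
beliefs of player 1 avoid `𝓛`. -/
def LWin (G : Game K I J C D) (𝓛 : Set (Finset K)) (L : Finset K) {n : ℕ}
    (h : Hist K C D n) : Prop :=
  ∃ m : Fin (n + 1), h.state m ∈ G.T ∧
    ∀ r : ℕ, 1 ≤ r → r ≤ m.val → G.B1pseq L (h.sig1.take r) ∉ 𝓛

/-- The payoff `γ₁^𝓛(δ,σ,τ)` of player 1 in the `𝓛`-game, for an initial
distribution `δ` with support `L`. -/
def Lval (G : Game K I J C D) (𝓛 : Set (Finset K)) (L : Finset K) (δ : FDist K)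
    (σ : Strategy1 I C) (τ : Strategy2 J D) : ℝ :=
  ⨆ n : ℕ, ∑ h : Hist K C D n, if G.LWin 𝓛 L h then G.playProb δ σ τ n h else 0

end Game

/-- The uniformly random strategy `σ_R` of player 1. -/
def randomStrat (I C : Type*) [Fintype I] [Nonempty I] : Strategy1 I C :=
  fun _ => uniform Finset.univ Finset.univ_nonempty
variable {K I J C D : Type*} [Fintype K] [Fintype I] [Fintype J] [Fintype C] [Fintype D]
  [Nonempty K] [Nonempty I] [Nonempty J] [Nonempty C] [Nonempty D]

/-- The decreasing sequence `𝓛₀ = P(K∖T)`, `𝓛_{n+1} = Φ(𝓛ₙ)`. -/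
def Game.PhiIter (G : Game K I J C D) : ℕ → Set (Finset K)
  | 0 => {L | L ∩ G.T = ∅}
  | n + 1 => G.Phi (G.PhiIter n)

/-! ### Auxiliary infrastructure for the proof -/

namespace Hist

variable {K C D : Type*}

lemma ext' {n : ℕ} {h₁ h₂ : Hist K C D n} (hf : h₁.first = h₂.first)
    (hs : h₁.steps = h₂.steps) : h₁ = h₂ := by
  cases h₁; cases h₂; cases hf; cases hs; rfl

/-- Removing the first step of a play. -/
def tail {n : ℕ} (h : Hist K C D (n + 1)) : Hist K C D n :=
  ⟨(h.steps 0).2.2, fun m => h.steps m.succ⟩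

@[simp] lemma tail_first {n : ℕ} (h : Hist K C D (n + 1)) :
    h.tail.first = (h.steps 0).2.2 := rfl

@[simp] lemma tail_steps {n : ℕ} (h : Hist K C D (n + 1)) (m : Fin n) :
    h.tail.steps m = h.steps m.succ := rfl

@[simp] lemma init_first {n : ℕ} (h : Hist K C D (n + 1)) :
    h.init.first = h.first := rfl

@[simp] lemma init_steps {n : ℕ} (h : Hist K C D (n + 1)) (m : Fin n) :
    h.init.steps m = h.steps m.castSucc := rfl

lemma init_tail {n : ℕ} (h : Hist K C D (n + 2)) : h.init.tail = h.tail.init := by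
  refine ext' ?_ ?_
  · show (h.init.steps 0).2.2 = (h.steps 0).2.2
    rw [init_steps]
    norm_num
  · funext m
    show h.init.steps m.succ = h.tail.steps m.castSucc
    rw [init_steps, tail_steps]
    exact congrArg h.steps (Fin.ext (by simp))

lemma tail_last {n : ℕ} (h : Hist K C D (n + 1)) : h.tail.last = h.last := by
  cases n with
  | zero =>
      show (h.steps 0).2.2 = (h.steps (Fin.last 0)).2.2
      norm_num
  | succ m =>
      show (h.tail.steps (Fin.last m)).2.2 = (h.steps (Fin.last (m + 1))).2.2
      rw [tail_steps, Fin.succ_last]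

lemma sig1_eq_cons {n : ℕ} (h : Hist K C D (n + 1)) :
    h.sig1 = (h.steps 0).1 :: h.tail.sig1 := by
  simp [Hist.sig1, List.ofFn_succ, tail]

lemma sig2_eq_cons {n : ℕ} (h : Hist K C D (n + 1)) :
    h.sig2 = (h.steps 0).2.1 :: h.tail.sig2 := by
  simp [Hist.sig2, List.ofFn_succ, tail]

/-- A play of length `0` is just a state. -/
def equivZero (K C D : Type*) : Hist K C D 0 ≃ K where
  toFun h := h.first
  invFun k := ⟨k, Fin.elim0⟩
  left_inv h := ext' rfl (funext fun m => m.elim0)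
  right_inv k := rfl

/-- Splitting off the last step of a play. -/
def equivSnoc (K C D : Type*) (n : ℕ) : Hist K C D (n + 1) ≃ Hist K C D n × (C × D × K) where
  toFun h := (h.init, h.steps (Fin.last n))
  invFun p := ⟨p.1.first, Fin.snoc p.1.steps p.2⟩
  left_inv h := by
    refine ext' rfl (funext fun m => ?_)
    induction m using Fin.lastCases with
    | last => simp
    | cast m => simp [Hist.init]
  right_inv p := by
    obtain ⟨h₀, x⟩ := p
    simp only [Prod.mk.injEq]
    exact ⟨ext' rfl (funext fun m => by simp [Hist.init]), by simp⟩

@[simp] lemma equivSnoc_symm_first {n : ℕ} (p : Hist K C D n × (C × D × K)) :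
    ((equivSnoc K C D n).symm p).first = p.1.first := rfl

@[simp] lemma equivSnoc_symm_init {n : ℕ} (p : Hist K C D n × (C × D × K)) :
    ((equivSnoc K C D n).symm p).init = p.1 :=
  ext' rfl (funext fun m => by simp [Hist.init, equivSnoc])

@[simp] lemma equivSnoc_symm_steps_last {n : ℕ} (p : Hist K C D n × (C × D × K)) :
    ((equivSnoc K C D n).symm p).steps (Fin.last n) = p.2 := by
  simp [equivSnoc]

@[simp] lemma equivSnoc_symm_steps_castSucc {n : ℕ} (p : Hist K C D n × (C × D × K))
    (m : Fin n) :
    ((equivSnoc K C D n).symm p).steps m.castSucc = p.1.steps m := by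
  simp [equivSnoc]

/-- Splitting off the first step of a play. -/
def equivCons (K C D : Type*) (n : ℕ) : Hist K C D (n + 1) ≃ K × C × D × Hist K C D n where
  toFun h := (h.first, (h.steps 0).1, (h.steps 0).2.1, h.tail)
  invFun p := ⟨p.1, Fin.cases (p.2.1, p.2.2.1, p.2.2.2.first) p.2.2.2.steps⟩
  left_inv h := by
    refine ext' rfl (funext fun m => ?_)
    induction m using Fin.cases with
    | zero => simp [tail]
    | succ m => simp [tail]
  right_inv p := by
    obtain ⟨k, c, d, h'⟩ := p
    have h4 : (Hist.mk k (Fin.cases (c, d, h'.first) h'.steps) : Hist K C D (n+1)).tail = h' :=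
      ext' (by simp [tail]) (funext fun m => by simp [tail])
    simp [h4]

@[simp] lemma equivCons_symm_first {n : ℕ} (k : K) (c : C) (d : D) (h' : Hist K C D n) :
    ((equivCons K C D n).symm (k, c, d, h')).first = k := rfl

@[simp] lemma equivCons_symm_steps_zero {n : ℕ} (k : K) (c : C) (d : D) (h' : Hist K C D n) :
    ((equivCons K C D n).symm (k, c, d, h')).steps 0 = (c, d, h'.first) := by
  simp [equivCons]

@[simp] lemma equivCons_symm_steps_succ {n : ℕ} (k : K) (c : C) (d : D) (h' : Hist K C D n)
    (m : Fin n) :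
    ((equivCons K C D n).symm (k, c, d, h')).steps m.succ = h'.steps m := by
  simp [equivCons]

@[simp] lemma equivCons_symm_tail {n : ℕ} (k : K) (c : C) (d : D) (h' : Hist K C D n) :
    ((equivCons K C D n).symm (k, c, d, h')).tail = h' :=
  ext' (by simp [tail]) (funext fun m => by simp [tail])

end Hist

namespace Game

variable {K I J C D : Type*} [Fintype K] [Fintype I] [Fintype J] [Fintype C] [Fintype D]

lemma step_nonneg (G : Game K I J C D) (ρ₁ : FDist I) (ρ₂ : FDist J) (k : K) (x : C × D × K) :
    0 ≤ ∑ i : I, ∑ j : J, ρ₁.f i * ρ₂.f j * G.p k i j x :=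
  Finset.sum_nonneg fun i _ => Finset.sum_nonneg fun j _ =>
    mul_nonneg (mul_nonneg (ρ₁.nonneg i) (ρ₂.nonneg j)) (G.p_nonneg _ _ _ _)

lemma playProb_nonneg (G : Game K I J C D) (δ : FDist K) (σ : Strategy1 I C)
    (τ : Strategy2 J D) : ∀ (n : ℕ) (h : Hist K C D n), 0 ≤ G.playProb δ σ τ n h
  | 0, h => δ.nonneg _
  | n + 1, h =>
      mul_nonneg (playProb_nonneg G δ σ τ n h.init) (G.step_nonneg _ _ _ _)

lemma step_sum (G : Game K I J C D) (ρ₁ : FDist I) (ρ₂ : FDist J) (k : K) :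
    ∑ x : C × D × K, ∑ i : I, ∑ j : J, ρ₁.f i * ρ₂.f j * G.p k i j x = 1 := by
  rw [Finset.sum_comm]
  have h1 : ∀ i : I, (∑ x : C × D × K, ∑ j : J, ρ₁.f i * ρ₂.f j * G.p k i j x) = ρ₁.f i := by
    intro i
    rw [Finset.sum_comm]
    have h2 : ∀ j : J, (∑ x : C × D × K, ρ₁.f i * ρ₂.f j * G.p k i j x) = ρ₁.f i * ρ₂.f j := by
      intro j
      rw [← Finset.mul_sum, G.p_sum, mul_one]
    rw [Finset.sum_congr rfl fun j _ => h2 j, ← Finset.mul_sum, ρ₂.sum_one, mul_one]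
  rw [Finset.sum_congr rfl fun i _ => h1 i, ρ₁.sum_one]

lemma playProb_factor (G : Game K I J C D) (δ : FDist K) (σ : Strategy1 I C)
    (τ : Strategy2 J D) : ∀ (n : ℕ) (h : Hist K C D n),
      G.playProb δ σ τ n h = δ.f h.first * G.playProb (dirac h.first) σ τ n h
  | 0, h => by simp [playProb, dirac]
  | n + 1, h => by
      have ih := playProb_factor G δ σ τ n h.init
      simp only [playProb]
      rw [ih, Hist.init_first]
      ring

lemma playProb_snoc (G : Game K I J C D) (δ : FDist K) (σ : Strategy1 I C)
    (τ : Strategy2 J D) (n : ℕ) (h₀ : Hist K C D n) (x : C × D × K) :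
    G.playProb δ σ τ (n + 1) ((Hist.equivSnoc K C D n).symm (h₀, x)) =
      G.playProb δ σ τ n h₀ *
        ∑ i : I, ∑ j : J, (σ h₀.sig1).f i * (τ h₀.sig2).f j * G.p h₀.last i j x := by
  simp [playProb]

lemma sum_first (G : Game K I J C D) (δ : FDist K) (σ : Strategy1 I C)
    (τ : Strategy2 J D) : ∀ (n : ℕ) (k : K),
      (∑ h : Hist K C D n, if h.first = k then G.playProb δ σ τ n h else 0) = δ.f k
  | 0, k => by
    rw [← Equiv.sum_comp (Hist.equivZero K C D).symm]
    refine (Finset.sum_eq_single k (fun b _ hb => if_neg hb) (fun h => absurd (Finset.mem_univ k) h)).trans ?_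
    simp [Hist.equivZero, playProb]
  | n + 1, k => by
    rw [← Equiv.sum_comp (Hist.equivSnoc K C D n).symm, Fintype.sum_prod_type]
    have h1 : ∀ h₀ : Hist K C D n,
        (∑ x : C × D × K,
            if ((Hist.equivSnoc K C D n).symm (h₀, x)).first = k then
              G.playProb δ σ τ (n + 1) ((Hist.equivSnoc K C D n).symm (h₀, x)) else 0)
          = if h₀.first = k then G.playProb δ σ τ n h₀ else 0 := by
      intro h₀
      by_cases hk : h₀.first = k
      · simp only [Hist.equivSnoc_symm_first, hk, if_pos]
        rw [Finset.sum_congr rfl fun x _ => G.playProb_snoc δ σ τ n h₀ x,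
          ← Finset.mul_sum, G.step_sum, mul_one]
      · simp only [Hist.equivSnoc_symm_first, hk, if_neg, Finset.sum_const_zero,
          if_false]
    rw [Finset.sum_congr rfl fun h₀ _ => h1 h₀]
    exact sum_first G δ σ τ n k

lemma reach_succ_le (G : Game K I J C D) (δ : FDist K) (σ : Strategy1 I C)
    (τ : Strategy2 J D) (n : ℕ) :
    (∑ h : Hist K C D n,
        if ∃ m : Fin n, (h.steps m).2.2 ∈ G.T then G.playProb δ σ τ n h else 0)
      ≤ ∑ h : Hist K C D (n + 1),
        if ∃ m : Fin (n + 1), (h.steps m).2.2 ∈ G.T then G.playProb δ σ τ (n + 1) h else 0 := by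
  rw [← Equiv.sum_comp (Hist.equivSnoc K C D n).symm, Fintype.sum_prod_type]
  refine Finset.sum_le_sum fun h₀ _ => ?_
  by_cases hE : ∃ m : Fin n, (h₀.steps m).2.2 ∈ G.T
  · rw [if_pos hE]
    have hE' : ∀ x : C × D × K,
        ∃ m : Fin (n + 1), (((Hist.equivSnoc K C D n).symm (h₀, x)).steps m).2.2 ∈ G.T := by
      intro x
      obtain ⟨m, hm⟩ := hE
      exact ⟨m.castSucc, by simpa using hm⟩
    have h2 : ∀ x : C × D × K,
        (if ∃ m : Fin (n + 1), (((Hist.equivSnoc K C D n).symm (h₀, x)).steps m).2.2 ∈ G.T then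
            G.playProb δ σ τ (n + 1) ((Hist.equivSnoc K C D n).symm (h₀, x)) else 0)
          = G.playProb δ σ τ n h₀ *
              ∑ i : I, ∑ j : J, (σ h₀.sig1).f i * (τ h₀.sig2).f j * G.p h₀.last i j x := by
      intro x
      rw [if_pos (hE' x), G.playProb_snoc]
    rw [Finset.sum_congr rfl fun x _ => h2 x, ← Finset.mul_sum, G.step_sum, mul_one]
  · rw [if_neg hE]
    refine Finset.sum_nonneg fun x _ => ?_
    split_ifs
    · exact G.playProb_nonneg _ _ _ _ _
    · exact le_rfl

lemma sum_fdist_mul {X : Type*} [Fintype X] [Nonempty X] (hX : ∀ x₁ x₂ : X, x₁ = x₂)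
    (ρ : FDist X) (g : X → ℝ) : ∑ x : X, ρ.f x * g x = g (Classical.arbitrary X) := by
  have h1 : ∀ x : X, ρ.f x * g x = ρ.f x * g (Classical.arbitrary X) := fun x => by
    rw [hX x (Classical.arbitrary X)]
  rw [Finset.sum_congr rfl fun x _ => h1 x, ← Finset.sum_mul, ρ.sum_one, one_mul]

lemma step_indep [Nonempty I] (G : Game K I J C D) (hI : ∀ i₁ i₂ : I, i₁ = i₂)
    (ρ₁ ρ₁' : FDist I) (ρ₂ : FDist J) (k : K) (x : C × D × K) :
    ∑ i : I, ∑ j : J, ρ₁.f i * ρ₂.f j * G.p k i j x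
      = ∑ i : I, ∑ j : J, ρ₁'.f i * ρ₂.f j * G.p k i j x := by
  have key : ∀ ρ : FDist I,
      (∑ i : I, ∑ j : J, ρ.f i * ρ₂.f j * G.p k i j x)
        = ∑ j : J, ρ₂.f j * G.p k (Classical.arbitrary I) j x := by
    intro ρ
    have h1 : ∀ i : I, (∑ j : J, ρ.f i * ρ₂.f j * G.p k i j x)
        = ρ.f i * ∑ j : J, ρ₂.f j * G.p k i j x := by
      intro i
      rw [Finset.mul_sum]
      exact Finset.sum_congr rfl fun j _ => by ring
    rw [Finset.sum_congr rfl fun i _ => h1 i,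
      sum_fdist_mul hI ρ (fun i => ∑ j : J, ρ₂.f j * G.p k i j x)]
  rw [key ρ₁, key ρ₁']

lemma playProb_indep [Nonempty I] (G : Game K I J C D) (hI : ∀ i₁ i₂ : I, i₁ = i₂)
    (δ : FDist K) (σ σ' : Strategy1 I C) (τ : Strategy2 J D) :
    ∀ (n : ℕ) (h : Hist K C D n), G.playProb δ σ τ n h = G.playProb δ σ' τ n h
  | 0, h => rfl
  | n + 1, h => by
    simp only [playProb]
    rw [playProb_indep G hI δ σ σ' τ n h.init,
      G.step_indep hI (σ h.init.sig1) (σ' h.init.sig1)]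

lemma playProb_cons (G : Game K I J C D) (δ : FDist K) (σ : Strategy1 I C)
    (τ : Strategy2 J D) : ∀ (n : ℕ) (h : Hist K C D (n + 1)),
    G.playProb δ σ τ (n + 1) h =
      δ.f h.first *
        (∑ i : I, ∑ j : J, (σ []).f i * (τ []).f j * G.p h.first i j (h.steps 0)) *
        G.playProb (dirac (h.steps 0).2.2) (fun cs => σ ((h.steps 0).1 :: cs))
          (fun ds => τ ((h.steps 0).2.1 :: ds)) n h.tail
  | 0, h => by
    have h0 : h.init.sig1 = ([] : List C) := by
      simp [Hist.sig1]
    have h0' : h.init.sig2 = ([] : List D) := by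
      simp [Hist.sig2]
    have hlast : h.init.last = h.first := rfl
    have hfl : (Fin.last 0 : Fin 1) = 0 := rfl
    simp only [playProb, h0, h0', hlast, hfl, Hist.init_first, Hist.tail_first, dirac]
    norm_num
  | n + 1, h => by
    have ih := playProb_cons G δ σ τ n h.init
    have h0 : h.init.steps 0 = h.steps 0 := by
      rw [Hist.init_steps]
      norm_num
    have hs1 : h.init.sig1 = (h.steps 0).1 :: h.tail.init.sig1 := by
      rw [Hist.sig1_eq_cons h.init, h0, Hist.init_tail]
    have hs2 : h.init.sig2 = (h.steps 0).2.1 :: h.tail.init.sig2 := by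
      rw [Hist.sig2_eq_cons h.init, h0, Hist.init_tail]
    have hlast : h.init.last = h.tail.init.last := by
      rw [← Hist.init_tail]
      exact (Hist.tail_last h.init).symm
    have hstep : h.steps (Fin.last (n + 1)) = h.tail.steps (Fin.last n) := by
      rw [Hist.tail_steps, Fin.succ_last]
    conv_lhs => rw [playProb]
    rw [ih, h0, Hist.init_tail, Hist.init_first, hs1, hs2, hlast, hstep]
    conv_rhs => rw [playProb]
    ring

lemma B2_empty (G : Game K I J C D) (d : D) : G.B2 ∅ d = ∅ := by
  ext k
  simp [Game.B2]

end Game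

lemma fdist_exists_pos {X : Type*} [Fintype X] [Nonempty X] (ρ : FDist X) :
    ∃ x, 0 < ρ.f x := by
  by_contra hc
  push_neg at hc
  have h0 : ∑ x, ρ.f x = 0 :=
    Finset.sum_eq_zero fun x _ => le_antisymm (hc x) (ρ.nonneg x)
  rw [ρ.sum_one] at h0
  norm_num at h0

lemma exists_pos_of_sum_pos {X : Type*} {s : Finset X} {f : X → ℝ}
    (h : 0 < ∑ x ∈ s, f x) : ∃ x ∈ s, 0 < f x := by
  by_contra hc
  push_neg at hc
  exact absurd (Finset.sum_nonpos hc) (not_le.mpr h)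

lemma Game.empty_mem_PhiIter (G : Game K I J C D) : ∀ n : ℕ, (∅ : Finset K) ∈ G.PhiIter n
  | 0 => by simp [Game.PhiIter]
  | n + 1 =>
      ⟨G.empty_mem_PhiIter n, by simp, Classical.arbitrary J,
        fun d _ => by rw [G.B2_empty]; exact G.empty_mem_PhiIter n⟩

lemma event_cons (G : Game K I J C D) (n : ℕ) (k : K) (c : C) (d : D) (h' : Hist K C D n) :
    (∃ m : Fin (n + 1), (((Hist.equivCons K C D n).symm (k, c, d, h')).steps m).2.2 ∈ G.T)
      ↔ h'.first ∈ G.T ∨ ∃ m : Fin n, (h'.steps m).2.2 ∈ G.T := by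
  rw [Fin.exists_fin_succ]
  simp

/-- when player 1 has a single action, from every support in
`𝓚ₙ = P(K∖T) ∖ 𝓛ₙ`, against every strategy of player 2, the play visits a
target state at some step `m` with `2 ≤ m ≤ n+1` with positive probability.
(States are `0`-indexed here: the `1`-indexed states `k_m`, `2 ≤ m ≤ n+1`, are
the third components of the `n` steps of a play with `n+1` states.) -/
theorem positive_reach_of_not_PhiIter (G : Game K I J C D)
    (hI : ∀ i₁ i₂ : I, i₁ = i₂) (n : ℕ) (L : Finset K)
    (hLT : L ∩ G.T = ∅) (hnot : L ∉ G.PhiIter n) (hL : L.Nonempty) :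
    ∀ δ : FDist K, δ.support = L →
      ∀ (σ : Strategy1 I C) (τ : Strategy2 J D),
        0 < ∑ h : Hist K C D n,
          if ∃ m : Fin n, (h.steps m).2.2 ∈ G.T then G.playProb δ σ τ n h else 0 := by
  induction n generalizing L with
  | zero => exact absurd hLT hnot
  | succ n ih =>
    intro δ hδ σ τ
    by_cases hmem : L ∈ G.PhiIter n
    swap
    · exact lt_of_lt_of_le (ih L hLT hmem hL δ hδ σ τ) (G.reach_succ_le δ σ τ n)
    · have hfail : ∀ j : J, ∃ d : D, G.act₂ d = j ∧ G.B2 L d ∉ G.PhiIter n := by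
        have hx : ¬ ∃ j : J, ∀ d : D, G.act₂ d = j → G.B2 L d ∈ G.PhiIter n :=
          fun hx => hnot ⟨hmem, hLT, hx⟩
        push_neg at hx
        exact hx
      obtain ⟨j₀, hj₀⟩ := fdist_exists_pos (τ [])
      obtain ⟨d₀, hd₀, hM⟩ := hfail j₀
      set M := G.B2 L d₀ with hMdef
      have hone : ∀ (ρ : FDist I) (i : I), ρ.f i = 1 := by
        intro ρ i
        haveI : Subsingleton I := ⟨hI⟩
        rw [← ρ.sum_one]
        exact (Fintype.sum_subsingleton _ i).symm
      set w : K → ℝ := fun k₂ => ∑ k : K, ∑ c : C,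
        δ.f k * ∑ i : I, ∑ j : J, (σ []).f i * (τ []).f j * G.p k i j (c, d₀, k₂) with hw
      have hδsupp : ∀ k : K, 0 < δ.f k ↔ k ∈ L := by
        intro k
        rw [← hδ]
        simp [FDist.support]
      have hw_nonneg : ∀ k₂, 0 ≤ w k₂ :=
        fun k₂ => Finset.sum_nonneg fun k _ => Finset.sum_nonneg fun c _ =>
          mul_nonneg (δ.nonneg k) (G.step_nonneg _ _ _ _)
      have hw_pos : ∀ k₂ ∈ M, 0 < w k₂ := by
        intro k₂ hk₂
        rw [hMdef, Game.B2, Finset.mem_filter] at hk₂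
        obtain ⟨-, l, hlL, c, hp⟩ := hk₂
        rw [hd₀] at hp
        have hterm : 0 < (σ []).f (G.act₁ c) * (τ []).f j₀ * G.p l (G.act₁ c) j₀ (c, d₀, k₂) := by
          rw [hone (σ []) (G.act₁ c), one_mul]
          exact mul_pos hj₀ hp
        have hstpl : 0 < ∑ i : I, ∑ j : J, (σ []).f i * (τ []).f j * G.p l i j (c, d₀, k₂) := by
          refine Finset.sum_pos' (fun i _ => Finset.sum_nonneg fun j _ =>
            mul_nonneg (mul_nonneg ((σ []).nonneg i) ((τ []).nonneg j)) (G.p_nonneg _ _ _ _)) ?_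
          exact ⟨G.act₁ c, Finset.mem_univ _,
            Finset.sum_pos' (fun j _ => mul_nonneg (mul_nonneg ((σ []).nonneg _)
              ((τ []).nonneg j)) (G.p_nonneg _ _ _ _)) ⟨j₀, Finset.mem_univ _, hterm⟩⟩
        rw [hw]
        refine Finset.sum_pos' (fun k _ => Finset.sum_nonneg fun c' _ =>
          mul_nonneg (δ.nonneg k) (G.step_nonneg _ _ _ _)) ?_
        exact ⟨l, Finset.mem_univ _,
          Finset.sum_pos' (fun c' _ => mul_nonneg (δ.nonneg l) (G.step_nonneg _ _ _ _))
            ⟨c, Finset.mem_univ _, mul_pos ((hδsupp l).mpr hlL) hstpl⟩⟩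
      have hw_mem : ∀ k₂, 0 < w k₂ → k₂ ∈ M := by
        intro k₂ hpos
        rw [hw] at hpos
        obtain ⟨k, -, hk⟩ := exists_pos_of_sum_pos hpos
        obtain ⟨c, -, hc⟩ := exists_pos_of_sum_pos hk
        have hδk : 0 < δ.f k := by
          rcases mul_pos_iff.mp hc with ⟨h1, -⟩ | ⟨-, h2⟩
          · exact h1
          · exact absurd (G.step_nonneg (σ []) (τ []) k (c, d₀, k₂)) (not_le.mpr h2)
        have hstpk : 0 < ∑ i : I, ∑ j : J, (σ []).f i * (τ []).f j * G.p k i j (c, d₀, k₂) := by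
          rcases mul_pos_iff.mp hc with ⟨-, h1⟩ | ⟨h2, -⟩
          · exact h1
          · exact absurd (δ.nonneg k) (not_le.mpr h2)
        obtain ⟨i, -, hi⟩ := exists_pos_of_sum_pos hstpk
        obtain ⟨j, -, hj⟩ := exists_pos_of_sum_pos hi
        have hp : 0 < G.p k i j (c, d₀, k₂) := by
          by_contra hc2
          have h0 : G.p k i j (c, d₀, k₂) = 0 :=
            le_antisymm (not_lt.mp hc2) (G.p_nonneg _ _ _ _)
          rw [h0, mul_zero] at hj
          exact lt_irrefl 0 hj
        obtain ⟨hic, hjd⟩ := G.act_compat k i j c d₀ k₂ hp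
        rw [hMdef, Game.B2, Finset.mem_filter]
        exact ⟨Finset.mem_univ _, k, (hδsupp k).mp hδk, c, by rwa [← hic, ← hjd]⟩
      have hMne : M.Nonempty := by
        rw [Finset.nonempty_iff_ne_empty]
        intro hMe
        rw [hMe] at hM
        exact hM (G.empty_mem_PhiIter n)
      set Z : ℝ := ∑ k₂ : K, w k₂ with hZdef
      have hZ : 0 < Z := by
        obtain ⟨k₂, hk₂⟩ := hMne
        exact Finset.sum_pos' (fun k _ => hw_nonneg k) ⟨k₂, Finset.mem_univ _, hw_pos k₂ hk₂⟩
      set δ' : FDist K := ⟨fun k => w k / Z, fun k => div_nonneg (hw_nonneg k) hZ.le,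
        by rw [← Finset.sum_div, ← hZdef, div_self hZ.ne']⟩ with hδ'
      have hδ'f : ∀ k, δ'.f k = w k / Z := fun k => rfl
      have hδ'pos : ∀ k, 0 < δ'.f k ↔ k ∈ M := by
        intro k
        rw [hδ'f]
        constructor
        · intro h
          refine hw_mem k ?_
          by_contra hc
          push_neg at hc
          have h0 : w k = 0 := le_antisymm hc (hw_nonneg k)
          rw [h0, zero_div] at h
          exact lt_irrefl 0 h
        · intro h
          exact div_pos (hw_pos k h) hZ
      have hδ'supp : δ'.support = M := by
        ext k
        simp only [FDist.support, Finset.mem_filter, Finset.mem_univ, true_and]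
        exact hδ'pos k
      -- the two sums
      set S₂ : ℝ := ∑ h' : Hist K C D n,
        if h'.first ∈ G.T ∨ ∃ m : Fin n, (h'.steps m).2.2 ∈ G.T
        then G.playProb δ' σ (fun ds => τ (d₀ :: ds)) n h' else 0 with hS₂
      have key : Z * S₂ ≤ ∑ h : Hist K C D (n + 1),
          if ∃ m : Fin (n + 1), (h.steps m).2.2 ∈ G.T
          then G.playProb δ σ τ (n + 1) h else 0 := by
        have hFval : ∀ (k : K) (c : C) (d : D) (h' : Hist K C D n),
            (if ∃ m : Fin (n + 1), (((Hist.equivCons K C D n).symm (k, c, d, h')).steps m).2.2 ∈ G.T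
             then G.playProb δ σ τ (n + 1) ((Hist.equivCons K C D n).symm (k, c, d, h')) else 0)
            = if h'.first ∈ G.T ∨ ∃ m : Fin n, (h'.steps m).2.2 ∈ G.T
              then δ.f k * (∑ i : I, ∑ j : J, (σ []).f i * (τ []).f j * G.p k i j (c, d, h'.first)) *
                G.playProb (dirac h'.first) σ (fun ds => τ (d :: ds)) n h' else 0 := by
          intro k c d h'
          refine if_congr (event_cons G n k c d h') ?_ rfl
          rw [G.playProb_cons]
          simp only [Hist.equivCons_symm_first, Hist.equivCons_symm_steps_zero,
            Hist.equivCons_symm_tail]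
          rw [G.playProb_indep hI (dirac h'.first) (fun cs => σ (c :: cs)) σ
            (fun ds => τ (d :: ds)) n h']
        have e1 : (∑ h : Hist K C D (n + 1),
            if ∃ m : Fin (n + 1), (h.steps m).2.2 ∈ G.T
            then G.playProb δ σ τ (n + 1) h else 0)
            = ∑ k : K, ∑ c : C, ∑ d : D, ∑ h' : Hist K C D n,
              if h'.first ∈ G.T ∨ ∃ m : Fin n, (h'.steps m).2.2 ∈ G.T
              then δ.f k * (∑ i : I, ∑ j : J, (σ []).f i * (τ []).f j * G.p k i j (c, d, h'.first)) *
                G.playProb (dirac h'.first) σ (fun ds => τ (d :: ds)) n h' else 0 := by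
          rw [← Equiv.sum_comp (Hist.equivCons K C D n).symm]
          simp only [Fintype.sum_prod_type]
          exact Finset.sum_congr rfl fun k _ => Finset.sum_congr rfl fun c _ =>
            Finset.sum_congr rfl fun d _ => Finset.sum_congr rfl fun h' _ => hFval k c d h'
        rw [e1]
        have e2 : (∑ k : K, ∑ c : C, ∑ h' : Hist K C D n,
            if h'.first ∈ G.T ∨ ∃ m : Fin n, (h'.steps m).2.2 ∈ G.T
            then δ.f k * (∑ i : I, ∑ j : J, (σ []).f i * (τ []).f j * G.p k i j (c, d₀, h'.first)) *
              G.playProb (dirac h'.first) σ (fun ds => τ (d₀ :: ds)) n h' else 0)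
            ≤ ∑ k : K, ∑ c : C, ∑ d : D, ∑ h' : Hist K C D n,
              if h'.first ∈ G.T ∨ ∃ m : Fin n, (h'.steps m).2.2 ∈ G.T
              then δ.f k * (∑ i : I, ∑ j : J, (σ []).f i * (τ []).f j * G.p k i j (c, d, h'.first)) *
                G.playProb (dirac h'.first) σ (fun ds => τ (d :: ds)) n h' else 0 := by
          refine Finset.sum_le_sum fun k _ => Finset.sum_le_sum fun c _ => ?_
          refine Finset.single_le_sum (f := fun d : D => ∑ h' : Hist K C D n,
            if h'.first ∈ G.T ∨ ∃ m : Fin n, (h'.steps m).2.2 ∈ G.T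
            then δ.f k * (∑ i : I, ∑ j : J, (σ []).f i * (τ []).f j * G.p k i j (c, d, h'.first)) *
              G.playProb (dirac h'.first) σ (fun ds => τ (d :: ds)) n h' else 0)
            (fun d _ => Finset.sum_nonneg fun h' _ => ?_) (Finset.mem_univ d₀)
          split_ifs
          · exact mul_nonneg (mul_nonneg (δ.nonneg k) (G.step_nonneg _ _ _ _))
              (G.playProb_nonneg _ _ _ _ _)
          · exact le_rfl
        refine le_trans ?_ e2
        have e3 : ∀ h' : Hist K C D n,
            (∑ k : K, ∑ c : C,
              if h'.first ∈ G.T ∨ ∃ m : Fin n, (h'.steps m).2.2 ∈ G.T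
              then δ.f k * (∑ i : I, ∑ j : J, (σ []).f i * (τ []).f j * G.p k i j (c, d₀, h'.first)) *
                G.playProb (dirac h'.first) σ (fun ds => τ (d₀ :: ds)) n h' else 0)
            = Z * (if h'.first ∈ G.T ∨ ∃ m : Fin n, (h'.steps m).2.2 ∈ G.T
                then G.playProb δ' σ (fun ds => τ (d₀ :: ds)) n h' else 0) := by
          intro h'
          by_cases hE : h'.first ∈ G.T ∨ ∃ m : Fin n, (h'.steps m).2.2 ∈ G.T
          · simp only [if_pos hE]
            have hfold : (∑ k : K, ∑ c : C,
                δ.f k * (∑ i : I, ∑ j : J, (σ []).f i * (τ []).f j * G.p k i j (c, d₀, h'.first)) *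
                  G.playProb (dirac h'.first) σ (fun ds => τ (d₀ :: ds)) n h')
                = w h'.first * G.playProb (dirac h'.first) σ (fun ds => τ (d₀ :: ds)) n h' := by
              simp only [hw]
              rw [Finset.sum_mul]
              refine Finset.sum_congr rfl fun k _ => ?_
              rw [Finset.sum_mul]
            rw [hfold, G.playProb_factor δ' σ (fun ds => τ (d₀ :: ds)) n h', hδ'f]
            field_simp
          · simp [if_neg hE]
        have e4 : (∑ k : K, ∑ c : C, ∑ h' : Hist K C D n,
            if h'.first ∈ G.T ∨ ∃ m : Fin n, (h'.steps m).2.2 ∈ G.T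
            then δ.f k * (∑ i : I, ∑ j : J, (σ []).f i * (τ []).f j * G.p k i j (c, d₀, h'.first)) *
              G.playProb (dirac h'.first) σ (fun ds => τ (d₀ :: ds)) n h' else 0)
            = ∑ h' : Hist K C D n, ∑ k : K, ∑ c : C,
              if h'.first ∈ G.T ∨ ∃ m : Fin n, (h'.steps m).2.2 ∈ G.T
              then δ.f k * (∑ i : I, ∑ j : J, (σ []).f i * (τ []).f j * G.p k i j (c, d₀, h'.first)) *
                G.playProb (dirac h'.first) σ (fun ds => τ (d₀ :: ds)) n h' else 0 :=
          calc (∑ k : K, ∑ c : C, ∑ h' : Hist K C D n,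
              if h'.first ∈ G.T ∨ ∃ m : Fin n, (h'.steps m).2.2 ∈ G.T
              then δ.f k * (∑ i : I, ∑ j : J, (σ []).f i * (τ []).f j * G.p k i j (c, d₀, h'.first)) *
                G.playProb (dirac h'.first) σ (fun ds => τ (d₀ :: ds)) n h' else 0)
              = ∑ k : K, ∑ h' : Hist K C D n, ∑ c : C,
                if h'.first ∈ G.T ∨ ∃ m : Fin n, (h'.steps m).2.2 ∈ G.T
                then δ.f k * (∑ i : I, ∑ j : J, (σ []).f i * (τ []).f j * G.p k i j (c, d₀, h'.first)) *
                  G.playProb (dirac h'.first) σ (fun ds => τ (d₀ :: ds)) n h' else 0 :=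
                Finset.sum_congr rfl fun k _ => Finset.sum_comm
            _ = ∑ h' : Hist K C D n, ∑ k : K, ∑ c : C,
                if h'.first ∈ G.T ∨ ∃ m : Fin n, (h'.steps m).2.2 ∈ G.T
                then δ.f k * (∑ i : I, ∑ j : J, (σ []).f i * (τ []).f j * G.p k i j (c, d₀, h'.first)) *
                  G.playProb (dirac h'.first) σ (fun ds => τ (d₀ :: ds)) n h' else 0 :=
                Finset.sum_comm
        refine le_of_eq ?_
        rw [e4, hS₂, Finset.mul_sum]
        exact Finset.sum_congr rfl fun h' _ => (e3 h').symm
      have hS₂pos : 0 < S₂ := by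
        by_cases hMT : M ∩ G.T = ∅
        · have hpos := ih M hMT hM hMne δ' hδ'supp σ (fun ds => τ (d₀ :: ds))
          refine lt_of_lt_of_le hpos ?_
          rw [hS₂]
          refine Finset.sum_le_sum fun h' _ => ?_
          split_ifs with h1 h2
          · exact le_rfl
          · exact absurd (Or.inr h1) h2
          · exact G.playProb_nonneg _ _ _ _ _
          · exact le_rfl
        · obtain ⟨k₀, hk₀⟩ := Finset.nonempty_iff_ne_empty.mpr hMT
          rw [Finset.mem_inter] at hk₀
          have hle : δ'.f k₀ ≤ S₂ := by
            rw [← G.sum_first δ' σ (fun ds => τ (d₀ :: ds)) n k₀, hS₂]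
            refine Finset.sum_le_sum fun h' _ => ?_
            split_ifs with h1 h2
            · exact le_rfl
            · exact absurd (Or.inl (by rw [h1]; exact hk₀.2)) h2
            · exact G.playProb_nonneg _ _ _ _ _
            · exact le_rfl
          exact lt_of_lt_of_le ((hδ'pos k₀).mpr hk₀.1) hle
      exact lt_of_lt_of_le (mul_pos hZ hS₂pos) key
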